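/- Let p be an odd prime, f ≥ 1, e(K/L) = p^f - 1, e = e'·(p^f-1) for some e' ≥ 1. Consider integers r_i ∈ [0,e], c_i ∈ Z/(p^f-1) for i ∈ Z/fZ with c_{i+1} ≡ p(c_i + r_i) mod (p^f-1). Then α_i := p(p^{f-1} r_i + ... + r_{i+f-1})/(p^f-1) is an integer for all i, and c_i + α_i is well-defined modulo p^f - 1 with (c_{i+1} + α_{i+1}) ≡ p(c_i + α_i) mod (p^f - 1). -/

import Mathlib

/-- If `c (i+1) ≡ p (c i + r i) (mod p^f - 1)`, then the rational numbers
`α_i = p (Σ_j p^{f-1-j} r_{i+j})/(p^f - 1)` are integers and the exponents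
`c i + α i` satisfy the Frobenius-twist relation mod `p^f - 1`. -/
theorem stmt_10 (p f e' : ℕ) (hp : p.Prime) (hodd : Odd p) (hf : 1 ≤ f) (he' : 1 ≤ e')
    (r c : ZMod f → ℤ)
    (hr : ∀ i, 0 ≤ r i ∧ r i ≤ (e' : ℤ) * ((p : ℤ) ^ f - 1))
    (hc : ∀ i, c (i + 1) ≡ p * (c i + r i) [ZMOD ((p : ℤ) ^ f - 1)]) :
    ∃ α : ZMod f → ℤ,
      (∀ i, ((p : ℤ) ^ f - 1) * α i =
        p * ∑ j ∈ Finset.range f, (p : ℤ) ^ (f - 1 - j) * r (i + (j : ZMod f))) ∧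
      (∀ i, c (i + 1) + α (i + 1) ≡ p * (c i + α i) [ZMOD ((p : ℤ) ^ f - 1)]) := by
  set M : ℤ := (p : ℤ) ^ f - 1 with hMdef
  have hp2 : (2 : ℤ) ≤ (p : ℤ) := by exact_mod_cast hp.two_le
  have hM0 : M ≠ 0 := by
    have h2 : (2 : ℤ) ≤ (p : ℤ) ^ f := by
      calc (2:ℤ) ≤ (p:ℤ) := hp2
      _ ≤ (p:ℤ) ^ f := le_self_pow₀ (by linarith) (by omega)
    simp only [hMdef]; omega
  set S : ZMod f → ℤ := fun i => ∑ j ∈ Finset.range f, (p : ℤ) ^ (f - 1 - j) * r (i + (j : ZMod f))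
    with hSdef
  -- T i := Σ_{j<f} p^{f-j} r(i+j) equals p * S i
  have hT : ∀ i, ∑ j ∈ Finset.range f, (p : ℤ) ^ (f - j) * r (i + (j : ZMod f)) = p * S i := by
    intro i
    simp only [hSdef, Finset.mul_sum]
    refine Finset.sum_congr rfl fun j hj => ?_
    have hj' : j < f := Finset.mem_range.mp hj
    have : f - j = (f - 1 - j) + 1 := by omega
    rw [this, pow_succ]
    ring
  -- key recursion
  have keyA : ∀ i, (p : ℤ) * S i = M * r i + S (i + 1) := by
    intro i
    obtain ⟨m, rfl⟩ : ∃ m, f = m + 1 := ⟨f - 1, by omega⟩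
    rw [← hT]
    rw [Finset.sum_range_succ' (fun j => (p : ℤ) ^ (m + 1 - j) * r (i + (j : ZMod (m+1))))]
    have h0 : i + 1 + ((m : ℕ) : ZMod (m+1)) = i := by
      have h1 : (1 : ZMod (m+1)) + ((m : ℕ) : ZMod (m+1)) = 0 := by
        have h2 := ZMod.natCast_self (m + 1)
        push_cast at h2 ⊢
        linear_combination h2
      rw [add_assoc, h1, add_zero]
    have hS1 : S (i + 1) =
        (∑ j ∈ Finset.range m, (p : ℤ) ^ (m - j) * r (i + 1 + (j : ZMod (m+1)))) + r i := by
      simp only [hSdef]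
      rw [Finset.sum_range_succ]
      simp only [Nat.add_sub_cancel, Nat.sub_self, pow_zero, one_mul, h0]
    rw [hS1]
    have hsum : ∑ j ∈ Finset.range m,
          (fun j => (p : ℤ) ^ (m + 1 - j) * r (i + (j : ZMod (m+1)))) (j + 1)
        = ∑ j ∈ Finset.range m, (p : ℤ) ^ (m - j) * r (i + 1 + (j : ZMod (m+1))) := by
      refine Finset.sum_congr rfl fun j hj => ?_
      simp only
      have h1 : m + 1 - (j + 1) = m - j := by omega
      have h2 : i + ((j+1 : ℕ) : ZMod (m+1)) = i + 1 + (j : ZMod (m+1)) := by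
        push_cast; ring
      rw [h1, h2]
    rw [hsum]
    simp only [Nat.cast_zero, add_zero, Nat.sub_zero]
    ring
  -- iterate the congruence
  have hstep : ∀ k : ℕ, ∀ i, c (i + (k : ZMod f)) ≡
      (p : ℤ) ^ k * c i + ∑ j ∈ Finset.range k, (p : ℤ) ^ (k - j) * r (i + (j : ZMod f))
      [ZMOD M] := by
    intro k
    induction k with
    | zero => intro i; simp
    | succ k ih =>
      intro i
      have hcast : ((k + 1 : ℕ) : ZMod f) = (k : ZMod f) + 1 := by push_cast; ring
      have h1 : c (i + ((k+1 : ℕ) : ZMod f)) = c ((i + (k : ZMod f)) + 1) := by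
        rw [hcast]; ring_nf
      rw [h1]
      have h2 := hc (i + (k : ZMod f))
      have h3 : (p : ℤ) * (c (i + (k : ZMod f)) + r (i + (k : ZMod f))) ≡
          (p : ℤ) * (((p : ℤ) ^ k * c i +
            ∑ j ∈ Finset.range k, (p : ℤ) ^ (k - j) * r (i + (j : ZMod f))) +
            r (i + (k : ZMod f))) [ZMOD M] :=
        Int.ModEq.mul_left _ (Int.ModEq.add_right _ (ih i))
      have heq : (p : ℤ) * (((p : ℤ) ^ k * c i +
            ∑ j ∈ Finset.range k, (p : ℤ) ^ (k - j) * r (i + (j : ZMod f))) +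
            r (i + (k : ZMod f))) =
          (p : ℤ) ^ (k+1) * c i +
            ∑ j ∈ Finset.range (k+1), (p : ℤ) ^ (k + 1 - j) * r (i + (j : ZMod f)) := by
        have hsum : ∑ j ∈ Finset.range k, (p:ℤ) * ((p : ℤ) ^ (k - j) * r (i + (j : ZMod f)))
            = ∑ j ∈ Finset.range k, (p : ℤ) ^ (k + 1 - j) * r (i + (j : ZMod f)) := by
          refine Finset.sum_congr rfl fun j hj => ?_
          have hj' : j < k := Finset.mem_range.mp hj
          have : k + 1 - j = (k - j) + 1 := by omega
          rw [this, pow_succ]; ring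
        rw [Finset.sum_range_succ, ← hsum, ← Finset.mul_sum]
        have hkk : k + 1 - k = 1 := by omega
        rw [hkk, pow_one, pow_succ]
        ring
      exact (h2.trans h3).trans (by rw [heq])
  have keyB : ∀ i, M ∣ (p : ℤ) * S i := by
    intro i
    have h := hstep f i
    rw [ZMod.natCast_self, add_zero, hT] at h
    have h3 : M ∣ ((p : ℤ) ^ f * c i + (p : ℤ) * S i) - c i := Int.ModEq.dvd h
    have h2 : ((p : ℤ) ^ f * c i + (p : ℤ) * S i) - c i = M * c i + (p : ℤ) * S i := by
      rw [hMdef]; ring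
    rw [h2] at h3
    exact (dvd_add_right (Dvd.intro _ rfl)).mp h3
  refine ⟨fun i => ((p : ℤ) * S i) / M, fun i => Int.mul_ediv_cancel' (keyB i), ?_⟩
  intro i
  have hα : ((p:ℤ) * S (i+1)) / M = (p:ℤ) * (((p:ℤ) * S i) / M) - p * r i := by
    have hA : M * (((p:ℤ) * S (i+1)) / M)
        = M * ((p:ℤ) * (((p:ℤ) * S i) / M) - p * r i) := by
      rw [Int.mul_ediv_cancel' (keyB (i+1))]
      rw [show M * ((p:ℤ) * (((p:ℤ) * S i) / M) - p * r i)
          = (p:ℤ) * (M * (((p:ℤ) * S i) / M)) - p * (M * r i) by ring]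
      rw [Int.mul_ediv_cancel' (keyB i), keyA i]
      ring
    exact mul_left_cancel₀ hM0 hA
  calc c (i + 1) + ((p:ℤ) * S (i+1)) / M
      ≡ (p:ℤ) * (c i + r i) + ((p:ℤ) * (((p:ℤ) * S i) / M) - p * r i) [ZMOD M] := by
        rw [hα]; exact (hc i).add_right _
    _ = (p:ℤ) * (c i + ((p:ℤ) * S i) / M) := by ring
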